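/- For all natural numbers n and k with k ≤ n, the number of abelian squares (w, w') of size n over a 3-letter alphabet such that the letter 1 occurs exactly n−k times in w equals C(n,k)^2 · C(2k,k). Formally: the number of pairs of words w, w' : Fin n → Fin 3 such that every letter c ∈ Fin 3 occurs equally often in w and in w', and the number of positions i with w(i) = 0 is n−k, equals C(n,k)^2 · C(2k,k). -/

import Mathlib

open Finset

lemma fiber_sum (n : ℕ) (w : Fin n → Fin 3) :
    (univ.filter (fun i => w i = 0)).card + (univ.filter (fun i => w i = 1)).card
      + (univ.filter (fun i => w i = 2)).card = n := by
  have h := Finset.card_eq_sum_card_fiberwise (f := w) (s := univ) (t := (univ : Finset (Fin 3)))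
    (fun x _ => mem_univ _)
  simp [Fin.sum_univ_three, Finset.card_univ] at h
  omega

lemma cardWords (n j a : ℕ) :
    ((univ : Finset (Fin n → Fin 3)).filter (fun w =>
      (univ.filter (fun i => w i = 0)).card = j ∧
      (univ.filter (fun i => w i = 1)).card = a)).card = n.choose j * (n - j).choose a := by
  have hT : (((univ : Finset (Fin n)).powersetCard j).sigma
      (fun A => (Aᶜ).powersetCard a)).card = n.choose j * (n - j).choose a := by
    rw [Finset.card_sigma]
    rw [Finset.sum_congr rfl (fun A hA => ?_)]
    · rw [Finset.sum_const, Finset.card_powersetCard, card_univ, Fintype.card_fin,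
        smul_eq_mul]
    · rw [Finset.card_powersetCard]
      simp only [mem_powersetCard_univ] at hA
      rw [Finset.card_compl, Fintype.card_fin, hA]
  rw [← hT]
  apply Finset.card_bij' (fun w _ => ⟨univ.filter (fun i => w i = 0),
      univ.filter (fun i => w i = 1)⟩)
    (fun p _ => fun i => if i ∈ p.1 then 0 else if i ∈ p.2 then 1 else 2)
  case hi =>
    intro w hw
    simp only [mem_filter, mem_univ, true_and] at hw
    simp only [mem_sigma, mem_powersetCard]
    refine ⟨⟨subset_univ _, hw.1⟩, ?_, hw.2⟩
    intro i hi
    simp only [mem_filter, mem_univ, true_and] at hi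
    simp [mem_compl, hi]
  case hj =>
    intro p hp
    simp only [mem_sigma, mem_powersetCard] at hp
    obtain ⟨⟨-, h1⟩, hsub, h2⟩ := hp
    simp only [mem_filter, mem_univ, true_and]
    constructor
    · rw [← h1]; congr 1
      ext i
      simp only [mem_filter, mem_univ, true_and]
      by_cases hA : i ∈ p.1 <;> by_cases hB : i ∈ p.2 <;> simp [hA, hB]
    · rw [← h2]; congr 1
      ext i
      simp only [mem_filter, mem_univ, true_and]
      by_cases hA : i ∈ p.1 <;> by_cases hB : i ∈ p.2
      · exact absurd (hsub hB) (by simp [hA])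
      · simp [hA, hB]
      · simp [hA, hB]
      · simp [hA, hB]
  case left_inv =>
    intro w hw
    funext i
    have h3 : w i = 0 ∨ w i = 1 ∨ w i = 2 := by omega
    rcases h3 with h | h | h <;> simp [h]
  case right_inv =>
    intro p hp
    simp only [mem_sigma, mem_powersetCard] at hp
    obtain ⟨⟨-, h1⟩, hsub, h2⟩ := hp
    have hA : (univ.filter (fun i => (if i ∈ p.1 then (0:Fin 3) else if i ∈ p.2 then 1 else 2) = 0)) = p.1 := by
      ext i
      simp only [mem_filter, mem_univ, true_and]
      by_cases hX : i ∈ p.1 <;> by_cases hY : i ∈ p.2 <;> simp [hX, hY]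
    have hB : (univ.filter (fun i => (if i ∈ p.1 then (0:Fin 3) else if i ∈ p.2 then 1 else 2) = 1)) = p.2 := by
      ext i
      simp only [mem_filter, mem_univ, true_and]
      by_cases hX : i ∈ p.1 <;> by_cases hY : i ∈ p.2
      · exact absurd (hsub hY) (by simp [hX])
      · simp [hX, hY]
      · simp [hX, hY]
      · simp [hX, hY]
    simp only [hA, hB]

lemma sum_sq_choose (k : ℕ) : ∑ a ∈ range (k+1), (k.choose a)^2 = (2*k).choose k := by
  rw [two_mul, Nat.add_choose_eq, Finset.Nat.sum_antidiagonal_eq_sum_range_succ_mk]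
  apply Finset.sum_congr rfl
  intro a ha
  simp only [mem_range] at ha
  rw [sq, Nat.choose_symm (by omega : a ≤ k)]

theorem abelian_squares_count_by_ones_in_top_row (n k : ℕ) (hk : k ≤ n) :
    ((Finset.univ : Finset ((Fin n → Fin 3) × (Fin n → Fin 3))).filter (fun p =>
        (∀ c : Fin 3,
          (Finset.univ.filter (fun i => p.1 i = c)).card
            = (Finset.univ.filter (fun i => p.2 i = c)).card) ∧
        (Finset.univ.filter (fun i => p.1 i = 0)).card = n - k)).card
      = (n.choose k) ^ 2 * (2 * k).choose k := by
  set S := ((Finset.univ : Finset ((Fin n → Fin 3) × (Fin n → Fin 3))).filter (fun p =>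
        (∀ c : Fin 3,
          (Finset.univ.filter (fun i => p.1 i = c)).card
            = (Finset.univ.filter (fun i => p.2 i = c)).card) ∧
        (Finset.univ.filter (fun i => p.1 i = 0)).card = n - k)) with hS
  have hcard : S.card = ∑ a ∈ range (k+1),
      (S.filter (fun p => (univ.filter (fun i => p.1 i = 1)).card = a)).card := by
    apply Finset.card_eq_sum_card_fiberwise
    intro p hp
    simp only [hS, mem_coe, mem_filter, mem_univ, true_and] at hp
    have h1 := fiber_sum n p.1
    simp only [mem_coe, mem_range]
    omega
  rw [hcard]
  have hfib : ∀ a, (S.filter (fun p => (univ.filter (fun i => p.1 i = 1)).card = a))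
      = ((univ : Finset (Fin n → Fin 3)).filter (fun w =>
          (univ.filter (fun i => w i = 0)).card = n - k ∧
          (univ.filter (fun i => w i = 1)).card = a)) ×ˢ
        ((univ : Finset (Fin n → Fin 3)).filter (fun w =>
          (univ.filter (fun i => w i = 0)).card = n - k ∧
          (univ.filter (fun i => w i = 1)).card = a)) := by
    intro a
    ext p
    simp only [hS, mem_filter, mem_univ, true_and, mem_product]
    constructor
    · rintro ⟨⟨hall, h0⟩, h1⟩
      exact ⟨⟨h0, h1⟩, ⟨(hall 0).symm.trans h0, (hall 1).symm.trans h1⟩⟩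
    · rintro ⟨⟨h0, h1⟩, h0', h1'⟩
      refine ⟨⟨?_, h0⟩, h1⟩
      intro c
      have hs1 := fiber_sum n p.1
      have hs2 := fiber_sum n p.2
      have hc : c = 0 ∨ c = 1 ∨ c = 2 := by omega
      rcases hc with rfl | rfl | rfl
      · rw [h0, h0']
      · rw [h1, h1']
      · omega
  rw [Finset.sum_congr rfl (fun a _ => by
    rw [hfib a, Finset.card_product, cardWords, ← sq])]
  have hch : n.choose (n - k) = n.choose k := Nat.choose_symm hk
  have hnk : n - (n - k) = k := Nat.sub_sub_self hk
  rw [Finset.sum_congr rfl (fun a _ => by rw [hch, hnk, mul_pow])]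
  rw [← Finset.mul_sum, sum_sq_choose]
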